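/- Moore's partition refinement computes language equivalence on a deterministic weak Büchi automaton after rank-based preprocessing: if two states p, q of a DWA have the same Löding rank and for every finite word u ∈ Σ*, the states δ*(p,u) and δ*(q,u) have the same acceptance status, then p and q recognize the same ω-language. -/
import Mathlib


/-- A complete deterministic Büchi automaton over alphabet `A` with states `Q`. -/
structure DBA (Q A : Type) where
  init : Q
  step : Q → A → Q
  F : Set Q

namespace DBA

variable {Q A : Type}

/-- Extension of the transition function to finite words. -/
def stepList (M : DBA Q A) : Q → List A → Q
  | q, [] => q
  | q, a :: u => M.stepList (M.step q a) u

/-- `q` is reachable from `p`. -/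
def Reach (M : DBA Q A) (p q : Q) : Prop := ∃ u : List A, M.stepList p u = q

/-- `p` and `q` are in the same strongly connected component. -/
def SameSCC (M : DBA Q A) (p q : Q) : Prop := M.Reach p q ∧ M.Reach q p

/-- `q` lies on a cycle (i.e. its SCC is non-trivial). -/
def OnCycle (M : DBA Q A) (q : Q) : Prop := ∃ u : List A, u ≠ [] ∧ M.stepList q u = q

/-- Weakness: every SCC is entirely accepting or entirely rejecting. -/
def Weak (M : DBA Q A) : Prop := ∀ p q, M.SameSCC p q → (p ∈ M.F ↔ q ∈ M.F)

/-- The (unique) run on `w` starting in state `q`. -/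
def runFrom (M : DBA Q A) (q : Q) (w : ℕ → A) : ℕ → Q
  | 0 => q
  | n + 1 => M.step (M.runFrom q w n) (w n)

/-- Büchi acceptance from state `q`: the run visits `F` infinitely often. -/
def AcceptsFrom (M : DBA Q A) (q : Q) (w : ℕ → A) : Prop :=
  ∀ N, ∃ n, N ≤ n ∧ M.runFrom q w n ∈ M.F

/-- Büchi acceptance from the initial state. -/
def Accepts (M : DBA Q A) (w : ℕ → A) : Prop := M.AcceptsFrom M.init w

/-- The ω-language of state `q`. -/
def LangFrom (M : DBA Q A) (q : Q) : Set (ℕ → A) := {w | M.AcceptsFrom q w}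

/-- The ω-language of the automaton. -/
def Lang (M : DBA Q A) : Set (ℕ → A) := {w | M.Accepts w}

/-- `q` is an accepting sink. -/
def AcceptingSink (M : DBA Q A) (q : Q) : Prop := q ∈ M.F ∧ ∀ a, M.step q a = q

/-- Minimality: all states are reachable and no two distinct states are
language-equivalent. -/
def Minimal (M : DBA Q A) : Prop :=
  (∀ q, M.Reach M.init q) ∧ ∀ p q, M.LangFrom p = M.LangFrom q → p = q

/-- Product automaton with a chosen acceptance set. -/
def prod (M₁ : DBA Q A) {Q₂ : Type} (M₂ : DBA Q₂ A) (Fp : Set (Q × Q₂)) :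
    DBA (Q × Q₂) A :=
  ⟨(M₁.init, M₂.init), fun q a => (M₁.step q.1 a, M₂.step q.2 a), Fp⟩

/-- A ranking in the sense of Löding: constant on SCCs, non-increasing along
transitions, and with parity matching acceptance on states lying on cycles. -/
def IsRanking (M : DBA Q A) (r : Q → ℕ) : Prop :=
  (∀ p q, M.SameSCC p q → r p = r q) ∧
  (∀ q a, r (M.step q a) ≤ r q) ∧
  (∀ q, M.OnCycle q → (Even (r q) ↔ q ∈ M.F))

end DBA

/-- Recognizability by a (finite) deterministic weak Büchi automaton. -/
def DWARecognizable {A : Type} (L : Set (ℕ → A)) : Prop :=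
  ∃ (Q : Type) (_ : Fintype Q) (M : DBA Q A), M.Weak ∧ ∀ w, M.Accepts w ↔ w ∈ L

/-- Nondeterministic Büchi automata. -/
structure NBA (Q A : Type) where
  init : Set Q
  step : Q → A → Set Q
  F : Set Q

/-- Acceptance for nondeterministic Büchi automata. -/
def NBA.Accepts {Q A : Type} (M : NBA Q A) (w : ℕ → A) : Prop :=
  ∃ r : ℕ → Q, r 0 ∈ M.init ∧ (∀ n, r (n + 1) ∈ M.step (r n) (w n)) ∧
    ∀ N, ∃ n, N ≤ n ∧ r n ∈ M.F

/-- ω-regularity: recognizability by a finite nondeterministic Büchi automaton. -/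
def OmegaRegular {A : Type} (L : Set (ℕ → A)) : Prop :=
  ∃ (Q : Type) (_ : Fintype Q) (M : NBA Q A), ∀ w, M.Accepts w ↔ w ∈ L

/-- Guarantee languages: `W·Σ^ω` for a set `W` of finite words. -/
def IsGuaranteeLang {A : Type} (L : Set (ℕ → A)) : Prop :=
  ∃ W : Set (List A), L = {w | ∃ n : ℕ, (List.ofFn fun i : Fin n => w i) ∈ W}

/-- Safety languages: complements of guarantee languages. -/
def IsSafetyLang {A : Type} (L : Set (ℕ → A)) : Prop := IsGuaranteeLang Lᶜ

/-- Finite Boolean combinations (union, intersection, complement) of a family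
of languages. -/
inductive BoolCombOf {α : Type} (B : Set (Set α)) : Set α → Prop
  | base {L} : L ∈ B → BoolCombOf B L
  | compl {L} : BoolCombOf B L → BoolCombOf B Lᶜ
  | union {L₁ L₂} : BoolCombOf B L₁ → BoolCombOf B L₂ → BoolCombOf B (L₁ ∪ L₂)
  | inter {L₁ L₂} : BoolCombOf B L₁ → BoolCombOf B L₂ → BoolCombOf B (L₁ ∩ L₂)

namespace DBA
variable {Q A : Type}

lemma stepList_append (M : DBA Q A) (u v : List A) :
    ∀ q, M.stepList q (u ++ v) = M.stepList (M.stepList q u) v := by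
  induction u with
  | nil => intro q; rfl
  | cons a u ih => intro q; simp [stepList, ih]

lemma exists_word (M : DBA Q A) (q : Q) (w : ℕ → A) (m k : ℕ) :
    ∃ u : List A, u.length = k ∧
      M.stepList (M.runFrom q w m) u = M.runFrom q w (m + k) := by
  induction k with
  | zero => exact ⟨[], rfl, rfl⟩
  | succ k ih =>
      obtain ⟨u, hlen, hu⟩ := ih
      refine ⟨u ++ [w (m + k)], by simp [hlen], ?_⟩
      rw [stepList_append, hu]
      rfl

lemma reach_run (M : DBA Q A) (q : Q) (w : ℕ → A) {m n : ℕ} (h : m ≤ n) :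
    M.Reach (M.runFrom q w m) (M.runFrom q w n) := by
  obtain ⟨u, _, hu⟩ := M.exists_word q w m (n - m)
  exact ⟨u, by rwa [Nat.add_sub_cancel' h] at hu⟩

lemma runFrom_eq_stepList (M : DBA Q A) :
    ∀ (n : ℕ) (q : Q) (w : ℕ → A),
      M.runFrom q w n = M.stepList q (List.ofFn fun i : Fin n => w i) := by
  intro n
  induction n with
  | zero => intro q w; rfl
  | succ n ih =>
      intro q w
      have shift : ∀ m, M.runFrom q w (m + 1) =
          M.runFrom (M.step q (w 0)) (fun i => w (i + 1)) m := by
        intro m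
        induction m with
        | zero => rfl
        | succ m ihm =>
            show M.step (M.runFrom q w (m + 1)) (w (m + 1)) =
              M.step (M.runFrom (M.step q (w 0)) (fun i => w (i + 1)) m) (w (m + 1))
            rw [ihm]
      rw [shift n, ih]
      simp [List.ofFn_succ, stepList]

lemma rank_antitone (M : DBA Q A) (r : Q → ℕ) (hr : M.IsRanking r)
    (q : Q) (w : ℕ → A) {m n : ℕ} (hmn : m ≤ n) :
    r (M.runFrom q w n) ≤ r (M.runFrom q w m) := by
  have key : ∀ k, r (M.runFrom q w (m + k)) ≤ r (M.runFrom q w m) := by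
    intro k
    induction k with
    | zero => exact le_rfl
    | succ k ih => exact le_trans (hr.2.1 _ (w (m + k))) ih
  have := key (n - m)
  rwa [Nat.add_sub_cancel' hmn] at this

/-- Key lemma: acceptance from `q` iff the rank along the run is even
infinitely often. -/
lemma acceptsFrom_iff_evenRank (M : DBA Q A) [Fintype Q] (hw : M.Weak)
    (r : Q → ℕ) (hr : M.IsRanking r) (q : Q) (w : ℕ → A) :
    M.AcceptsFrom q w ↔ ∀ N, ∃ n, N ≤ n ∧ Even (r (M.runFrom q w n)) := by
  set ρ := M.runFrom q w with hρ
  -- the rank stabilizes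
  obtain ⟨N, hN⟩ : ∃ N, ∀ n, N ≤ n → r (ρ n) = r (ρ N) := by
    obtain ⟨N, hNmem⟩ := Nat.sInf_mem (s := Set.range fun n => r (ρ n)) ⟨r (ρ 0), 0, rfl⟩
    have h0 : r (ρ N) = sInf (Set.range fun n => r (ρ n)) := hNmem
    exact ⟨N, fun n hn => le_antisymm
      (M.rank_antitone r hr q w hn)
      (h0 ▸ Nat.sInf_le ⟨n, rfl⟩)⟩
  -- a state visited infinitely often
  obtain ⟨s, hs⟩ : ∃ s : Q, ∀ K, ∃ n, K ≤ n ∧ ρ n = s := by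
    by_contra hcon
    push_neg at hcon
    choose f hf using hcon
    set B := Finset.univ.sup f with hB
    exact hf (ρ B) B (Finset.le_sup (Finset.mem_univ _)) rfl
  obtain ⟨n₁, hn₁N, hn₁⟩ := hs N
  obtain ⟨n₂, hn₂, hn₂s⟩ := hs (n₁ + 1)
  -- `s` lies on a cycle
  have hcyc : M.OnCycle s := by
    obtain ⟨u, hlen, hu⟩ := M.exists_word q w n₁ (n₂ - n₁)
    simp only [← hρ] at hu
    refine ⟨u, ?_, ?_⟩
    · intro h
      rw [h] at hlen
      simp at hlen
      omega
    · rw [hn₁] at hu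
      rw [hu, Nat.add_sub_cancel' (by omega : n₁ ≤ n₂), hn₂s]
  -- every state from time `n₁` on is in the SCC of `s`
  have hscc : ∀ n, n₁ ≤ n → M.SameSCC s (ρ n) := by
    intro n hn
    obtain ⟨n₃, hn₃, hn₃s⟩ := hs n
    refine ⟨?_, ?_⟩
    · have h1 := M.reach_run q w hn
      simp only [← hρ] at h1
      rwa [hn₁] at h1
    · have h1 := M.reach_run q w hn₃
      simp only [← hρ] at h1
      rwa [hn₃s] at h1
  have hF : ∀ n, n₁ ≤ n → (ρ n ∈ M.F ↔ s ∈ M.F) :=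
    fun n hn => (hw s (ρ n) (hscc n hn)).symm
  have hrs : ∀ n, n₁ ≤ n → r (ρ n) = r s := by
    intro n hn
    rw [hN n (le_trans hn₁N hn), ← hN n₁ hn₁N, hn₁]
  have hpar : Even (r s) ↔ s ∈ M.F := hr.2.2 s hcyc
  constructor
  · intro hacc K
    obtain ⟨n, hn, hnF⟩ := hacc (max K n₁)
    refine ⟨n, le_trans (le_max_left _ _) hn, ?_⟩
    rw [hrs n (le_trans (le_max_right _ _) hn)]
    exact hpar.mpr ((hF n (le_trans (le_max_right _ _) hn)).mp hnF)
  · intro hev K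
    obtain ⟨n, hn, hne⟩ := hev n₁
    have hsF : s ∈ M.F := hpar.mp (by rwa [hrs n hn] at hne)
    exact ⟨max K n₁, le_max_left _ _,
      (hF _ (le_max_right _ _)).mpr hsF⟩

end DBA


/-- Moore's partition refinement after Löding's rank-based
preprocessing computes language equivalence: if two states of a DWA have the
same Löding rank and, for every finite word `u`, the states reached from them
by `u` have the same acceptance status (parity of the rank), then they
recognize the same ω-language. -/
theorem stmt16 {Q A : Type} [Fintype Q] (M : DBA Q A) (hw : M.Weak)
    (r : Q → ℕ) (hr : M.IsRanking r) (p q : Q) (hrank : r p = r q)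
    (hmoore : ∀ u : List A, (Even (r (M.stepList p u)) ↔ Even (r (M.stepList q u)))) :
    M.LangFrom p = M.LangFrom q := by
  ext w
  have hpar : ∀ n, Even (r (M.runFrom p w n)) ↔ Even (r (M.runFrom q w n)) := by
    intro n
    rw [M.runFrom_eq_stepList n p w, M.runFrom_eq_stepList n q w]
    exact hmoore _
  simp only [DBA.LangFrom, Set.mem_setOf_eq]
  rw [M.acceptsFrom_iff_evenRank hw r hr p w, M.acceptsFrom_iff_evenRank hw r hr q w]
  constructor <;> intro h N <;> obtain ⟨n, hn, he⟩ := h N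
  · exact ⟨n, hn, (hpar n).mp he⟩
  · exact ⟨n, hn, (hpar n).mpr he⟩
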